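/- Let c, c' > 0, set a := (c−1)² + 2cc' + (c')² + 2c', μ₊ := (1−c−c'+√a)/2 and μ₋ := (c+c'−1+√a)/2, and define x(t) := (1/√a)·[((c'−c+√a+1)/2)·e^{μ₊ t} − ((c'−c−√a+1)/2)·e^{−μ₋ t}] and y(t) := (c/√a)·(e^{μ₊ t} − e^{−μ₋ t}) for t ≥ 0. Then for every λ > 0 with λ² ≥ 1 − c − c' + √a, one has lim_{t → ∞} (x(t) + y(t)) · e^{−λ² t/2} / (λ·√(2πt)) = 0. -/
import Mathlib


open Real Filter

/-- `a = (c−1)² + 2cc' + (c')² + 2c'`. -/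
noncomputable def aConst (c c' : ℝ) : ℝ := (c - 1) ^ 2 + 2 * c * c' + c' ^ 2 + 2 * c'

/-- `μ₊ = (1 − c − c' + √a)/2`. -/
noncomputable def muPlus (c c' : ℝ) : ℝ := (1 - c - c' + Real.sqrt (aConst c c')) / 2

/-- `μ₋ = (c + c' − 1 + √a)/2`. -/
noncomputable def muMinus (c c' : ℝ) : ℝ := (c + c' - 1 + Real.sqrt (aConst c c')) / 2

/-- Expected number of active particles
`x(t) = (1/√a)[((c'−c+√a+1)/2) e^{μ₊ t} − ((c'−c−√a+1)/2) e^{−μ₋ t}]`. -/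
noncomputable def xActive (c c' t : ℝ) : ℝ :=
  (1 / Real.sqrt (aConst c c')) *
    (((c' - c + Real.sqrt (aConst c c') + 1) / 2) * Real.exp (muPlus c c' * t) -
      ((c' - c - Real.sqrt (aConst c c') + 1) / 2) * Real.exp (-muMinus c c' * t))

/-- Expected number of dormant particles `y(t) = (c/√a)(e^{μ₊ t} − e^{−μ₋ t})`. -/
noncomputable def yDormant (c c' t : ℝ) : ℝ :=
  (c / Real.sqrt (aConst c c')) * (Real.exp (muPlus c c' * t) - Real.exp (-muMinus c c' * t))

/-- For `λ > 0` with `λ² ≥ 1 − c − c' + √a`, the product of the expected total number of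
particles with the Gaussian tail bound `e^{−λ²t/2}/(λ√(2πt))` vanishes as `t → ∞`. -/
theorem expected_particles_times_gaussian_tail_tendsto_zero
    (c c' lam : ℝ) (hc : 0 < c) (hc' : 0 < c') (hlam : 0 < lam)
    (hspeed : lam ^ 2 ≥ 1 - c - c' + Real.sqrt (aConst c c')) :
    Tendsto (fun t : ℝ =>
        (xActive c c' t + yDormant c c' t) * Real.exp (-lam ^ 2 * t / 2) /
          (lam * Real.sqrt (2 * Real.pi * t)))
      atTop (nhds 0) := by
  
  set sa := Real.sqrt (aConst c c') with hsadef
  have hsa0 : 0 ≤ sa := Real.sqrt_nonneg _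
  set A : ℝ := |1 / sa| * (|(c' - c + sa + 1) / 2| + |(c' - c - sa + 1) / 2|) + |c / sa| * 2
    with hAdef
  have hA0 : 0 ≤ A := by positivity
  have hg : Tendsto (fun t : ℝ => A / (lam * Real.sqrt (2 * Real.pi * t))) atTop (nhds 0) := by
    have h1 : Tendsto (fun t : ℝ => lam * Real.sqrt (2 * Real.pi * t)) atTop atTop := by
      apply Tendsto.const_mul_atTop hlam
      have hsq : Tendsto Real.sqrt atTop atTop := by
        apply tendsto_atTop_atTop_of_monotone (fun a b h => Real.sqrt_le_sqrt h)
        intro b; exact ⟨b ^ 2, by rw [Real.sqrt_sq_eq_abs]; exact le_abs_self b⟩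
      exact hsq.comp (Tendsto.const_mul_atTop (by positivity : (0:ℝ) < 2 * Real.pi) tendsto_id)
    have := h1.inv_tendsto_atTop.const_mul A
    simpa [div_eq_mul_inv] using this
  apply squeeze_zero_norm' _ hg
  filter_upwards [eventually_gt_atTop (0:ℝ)] with t ht
  have hD : 0 < lam * Real.sqrt (2 * Real.pi * t) := by positivity
  rw [Real.norm_eq_abs, abs_div, abs_of_pos hD]
  gcongr
  -- key bound: |(x+y) e^{-lam^2 t / 2}| ≤ A
  set ep := Real.exp (muPlus c c' * t) with hep
  set em := Real.exp (-muMinus c c' * t) with hem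
  have hep0 : 0 < ep := Real.exp_pos _
  have hem0 : 0 < em := Real.exp_pos _
  have hemle : em ≤ ep := by
    apply Real.exp_le_exp.2
    unfold muPlus muMinus
    nlinarith [hsa0, ht.le]
  have hexp1 : ep * Real.exp (-lam ^ 2 * t / 2) ≤ 1 := by
    rw [hep, ← Real.exp_add, Real.exp_le_one_iff]
    have hmu : muPlus c c' ≤ lam ^ 2 / 2 := by unfold muPlus; linarith
    nlinarith [ht.le]
  have hx : |xActive c c' t| ≤ |1 / sa| * (|(c' - c + sa + 1) / 2| + |(c' - c - sa + 1) / 2|) * ep := by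
    unfold xActive
    rw [← hsadef, ← hep, ← hem, abs_mul]
    have h2 : |((c' - c + sa + 1) / 2) * ep - ((c' - c - sa + 1) / 2) * em|
        ≤ |(c' - c + sa + 1) / 2| * ep + |(c' - c - sa + 1) / 2| * em := by
      calc |((c' - c + sa + 1) / 2) * ep - ((c' - c - sa + 1) / 2) * em|
          ≤ |((c' - c + sa + 1) / 2) * ep| + |((c' - c - sa + 1) / 2) * em| := abs_sub _ _
        _ = |(c' - c + sa + 1) / 2| * ep + |(c' - c - sa + 1) / 2| * em := by
            rw [abs_mul, abs_mul, abs_of_pos hep0, abs_of_pos hem0]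
    calc |1 / sa| * |((c' - c + sa + 1) / 2) * ep - ((c' - c - sa + 1) / 2) * em|
        ≤ |1 / sa| * (|(c' - c + sa + 1) / 2| * ep + |(c' - c - sa + 1) / 2| * em) := by
          gcongr
      _ ≤ |1 / sa| * (|(c' - c + sa + 1) / 2| * ep + |(c' - c - sa + 1) / 2| * ep) := by
          gcongr
      _ = |1 / sa| * (|(c' - c + sa + 1) / 2| + |(c' - c - sa + 1) / 2|) * ep := by ring
  have hy : |yDormant c c' t| ≤ |c / sa| * 2 * ep := by
    unfold yDormant
    rw [← hsadef, ← hep, ← hem, abs_mul]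
    have h2 : |ep - em| ≤ 2 * ep := by
      rw [abs_of_nonneg (by linarith)]; linarith
    calc |c / sa| * |ep - em| ≤ |c / sa| * (2 * ep) := by gcongr
      _ = |c / sa| * 2 * ep := by ring
  have hsum : |xActive c c' t + yDormant c c' t| ≤ A * ep := by
    calc |xActive c c' t + yDormant c c' t| ≤ |xActive c c' t| + |yDormant c c' t| := abs_add_le _ _
      _ ≤ |1 / sa| * (|(c' - c + sa + 1) / 2| + |(c' - c - sa + 1) / 2|) * ep + |c / sa| * 2 * ep :=
          add_le_add hx hy
      _ = A * ep := by rw [hAdef]; ring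
  calc |(xActive c c' t + yDormant c c' t) * Real.exp (-lam ^ 2 * t / 2)|
      = |xActive c c' t + yDormant c c' t| * Real.exp (-lam ^ 2 * t / 2) := by
        rw [abs_mul, abs_of_pos (Real.exp_pos _)]
    _ ≤ A * ep * Real.exp (-lam ^ 2 * t / 2) := by
        gcongr
    _ = A * (ep * Real.exp (-lam ^ 2 * t / 2)) := by ring
    _ ≤ A * 1 := by gcongr
    _ = A := mul_one A
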